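/- Let a, b ∈ ℂ and N, n ∈ ℕ with n ≤ N, and suppose b + 1 + k ≠ 0 for every natural number k < N. Then the n-th Hahn moment satisfies ∑_{x=0}^N φ_n(x)·(a)_x·(−N)_x/((b + 1)_x · x!) = ((−N)_n·(a)_n/(b + 1)_n)·((b + 1 − a)_{N−n}/(b + 1 + n)_{N−n}). -/

import Mathlib

open Finset

/-- The Pochhammer symbol `(c)_n = ∏_{j=0}^{n-1} (c + j)`. -/
noncomputable def poch (c : ℂ) (n : ℕ) : ℂ := ∏ j ∈ Finset.range n, (c + (j : ℂ))

/-- The falling factorial `φ_n(x) = ∏_{j=0}^{n-1} (x - j)`. -/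
noncomputable def fallFac (n : ℕ) (x : ℂ) : ℂ := ∏ j ∈ Finset.range n, (x - (j : ℂ))

lemma poch_zero (c : ℂ) : poch c 0 = 1 := by simp [poch]

lemma poch_succ (c : ℂ) (n : ℕ) : poch c (n+1) = poch c n * (c + n) := by
  simp [poch, Finset.prod_range_succ]

lemma poch_succ' (c : ℂ) (n : ℕ) : poch c (n+1) = c * poch (c+1) n := by
  rw [poch, Finset.prod_range_succ', poch]
  simp only [Nat.cast_add, Nat.cast_one]
  rw [mul_comm]
  congr 1
  · simp
  · exact Finset.prod_congr rfl (fun j _ => by push_cast; ring)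

lemma poch_add (c : ℂ) (m n : ℕ) : poch c (m+n) = poch c m * poch (c + m) n := by
  rw [poch, Finset.prod_range_add, poch, poch]
  congr 1
  exact Finset.prod_congr rfl (fun j _ => by push_cast; ring)

lemma poch_ne_zero (c : ℂ) (n : ℕ) (h : ∀ k : ℕ, k < n → c + k ≠ 0) : poch c n ≠ 0 := by
  rw [poch]
  exact Finset.prod_ne_zero_iff.2 (fun k hk => h k (Finset.mem_range.1 hk))

lemma chu (M : ℕ) : ∀ c d : ℂ,
    ∑ y ∈ Finset.range (M+1), (-1:ℂ)^y * (M.choose y : ℂ) * poch c y * poch (d + y) (M - y)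
      = poch (d - c) M := by
  induction M with
  | zero => intro c d; simp [poch]
  | succ M ih =>
    intro c d
    have key : ∑ y ∈ Finset.range (M+1+1),
        (-1:ℂ)^y * ((M+1).choose y : ℂ) * poch c y * poch (d + y) (M + 1 - y)
        = (d - c) * ∑ i ∈ Finset.range (M+1),
            (-1:ℂ)^i * (M.choose i : ℂ) * poch c i * poch ((d+1) + i) (M - i) := by
      rw [Finset.sum_range_succ']
      have hB : (∑ i ∈ Finset.range (M+1+1),
            (-1:ℂ)^i * (M.choose i : ℂ) * poch c i * poch (d + i) (M + 1 - i))
          = (∑ i ∈ Finset.range (M+1),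
              (-1:ℂ)^(i+1) * (M.choose (i+1) : ℂ) * poch c (i+1) * poch (d + (i+1)) (M - i))
            + poch d (M+1) := by
        rw [Finset.sum_range_succ']
        simp [poch_zero]
      have hsplit : (∑ i ∈ Finset.range (M+1),
            (-1:ℂ)^(i+1) * (((M+1).choose (i+1) : ℕ) : ℂ) * poch c (i+1) * poch (d + ((i+1:ℕ):ℂ)) (M+1-(i+1)))
            + (-1:ℂ)^0 * (((M+1).choose 0 : ℕ) : ℂ) * poch c 0 * poch (d + (0:ℕ)) (M+1-0)
          = (∑ i ∈ Finset.range (M+1),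
              (-1:ℂ)^(i+1) * (M.choose i : ℂ) * poch c (i+1) * poch (d + (i+1)) (M - i))
            + ∑ i ∈ Finset.range (M+1+1),
              (-1:ℂ)^i * (M.choose i : ℂ) * poch c i * poch (d + i) (M + 1 - i) := by
        rw [hB]
        have : ∀ i ∈ Finset.range (M+1),
            (-1:ℂ)^(i+1) * (((M+1).choose (i+1) : ℕ) : ℂ) * poch c (i+1) * poch (d + ((i+1:ℕ):ℂ)) (M+1-(i+1))
            = (-1:ℂ)^(i+1) * (M.choose i : ℂ) * poch c (i+1) * poch (d + (i+1)) (M - i)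
              + (-1:ℂ)^(i+1) * (M.choose (i+1) : ℂ) * poch c (i+1) * poch (d + (i+1)) (M - i) := by
          intro i hi
          rw [Nat.choose_succ_succ]
          have : M + 1 - (i+1) = M - i := by omega
          rw [this]
          push_cast
          ring
        rw [Finset.sum_congr rfl this, Finset.sum_add_distrib]
        simp [poch_zero]
        ring
      rw [hsplit]
      -- now the second sum: last term is zero
      have hlast : ∑ i ∈ Finset.range (M+1+1),
            (-1:ℂ)^i * (M.choose i : ℂ) * poch c i * poch (d + i) (M + 1 - i)
          = ∑ i ∈ Finset.range (M+1),
            (-1:ℂ)^i * (M.choose i : ℂ) * poch c i * poch (d + i) (M + 1 - i) := by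
        rw [Finset.sum_range_succ]
        simp [Nat.choose_succ_self]
      rw [hlast, ← Finset.sum_add_distrib, Finset.mul_sum]
      apply Finset.sum_congr rfl
      intro i hi
      have hiM : i ≤ M := by simpa [Nat.lt_succ_iff] using hi
      have h1 : M + 1 - i = (M - i) + 1 := by omega
      rw [h1, poch_succ' (d + i) (M - i), poch_succ c i]
      rw [show d + ((i:ℂ) + 1) = (d + 1) + (i:ℂ) by ring]
      push_cast
      ring
    rw [key, ih c (d+1)]
    rw [show d + 1 - c = (d - c) + 1 by ring, ← poch_succ']

lemma fallFac_nat_lt (n x : ℕ) (h : x < n) : fallFac n (x : ℂ) = 0 := by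
  rw [fallFac]
  exact Finset.prod_eq_zero (Finset.mem_range.2 h) (by simp)

lemma fallFac_nat_add (n y : ℕ) : fallFac n ((n + y : ℕ) : ℂ) = ((n+y).descFactorial n : ℂ) := by
  rw [fallFac, Nat.descFactorial_eq_prod_range, Nat.cast_prod]
  apply Finset.prod_congr rfl
  intro j hj
  have : j ≤ n + y := by have := Finset.mem_range.1 hj; omega
  rw [Nat.cast_sub this]

lemma poch_neg_nat (M y : ℕ) (h : y ≤ M) :
    poch (-(M : ℂ)) y = (-1:ℂ)^y * (M.descFactorial y : ℂ) := by
  have step : poch (-(M : ℂ)) y = ∏ j ∈ Finset.range y, (-1 : ℂ) * (((M - j : ℕ)) : ℂ) := by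
    rw [poch]
    apply Finset.prod_congr rfl
    intro j hj
    have hj' : j ≤ M := le_trans (le_of_lt (Finset.mem_range.1 hj)) h
    rw [Nat.cast_sub hj']
    ring
  rw [step, Finset.prod_mul_distrib, Finset.prod_const, Finset.card_range,
    Nat.descFactorial_eq_prod_range, Nat.cast_prod]

/-- the `n`-th Hahn moment:
`∑_{x=0}^N φ_n(x) (a)_x (-N)_x / ((b+1)_x x!)
  = ((-N)_n (a)_n / (b+1)_n) ((b+1-a)_{N-n} / (b+1+n)_{N-n})`. -/
theorem hahn_moment (a b : ℂ) (N n : ℕ) (hn : n ≤ N)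
    (hb : ∀ k : ℕ, k < N → b + 1 + (k : ℂ) ≠ 0) :
    (∑ x ∈ Finset.range (N + 1),
        fallFac n (x : ℂ) * poch a x * poch (-(N : ℂ)) x / (poch (b + 1) x * (x.factorial : ℂ)))
      = (poch (-(N : ℂ)) n * poch a n / poch (b + 1) n) *
        (poch (b + 1 - a) (N - n) / poch (b + 1 + (n : ℂ)) (N - n)) := by
  set M := N - n with hM
  set d : ℂ := b + 1 + (n : ℂ) with hd
  set c : ℂ := a + (n : ℂ) with hc
  have hNM : N = n + M := by omega
  have hdj : ∀ j : ℕ, j < M → d + (j : ℂ) ≠ 0 := by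
    intro j hj
    have : d + (j : ℂ) = b + 1 + ((n + j : ℕ) : ℂ) := by rw [hd]; push_cast; ring
    rw [this]
    exact hb (n + j) (by omega)
  have hdM : poch d M ≠ 0 := poch_ne_zero d M hdj
  have hbn : poch (b+1) n ≠ 0 := poch_ne_zero _ _ (fun k hk => hb k (by omega))
  -- split the sum
  rw [show N + 1 = n + (M + 1) by omega, Finset.sum_range_add]
  have h0 : ∑ x ∈ Finset.range n,
      fallFac n (x:ℂ) * poch a x * poch (-(N : ℂ)) x / (poch (b + 1) x * (x.factorial : ℂ)) = 0 := by
    apply Finset.sum_eq_zero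
    intro x hx
    rw [fallFac_nat_lt n x (Finset.mem_range.1 hx)]
    simp
  rw [h0, zero_add]
  -- rewrite each term
  have hterm : ∀ y ∈ Finset.range (M+1),
      fallFac n ((n + y : ℕ) : ℂ) * poch a (n+y) * poch (-(N : ℂ)) (n+y)
        / (poch (b + 1) (n+y) * ((n+y).factorial : ℂ))
      = (poch (-(N : ℂ)) n * poch a n / poch (b + 1) n) *
          (poch c y * poch (-(M : ℂ)) y / (poch d y * (y.factorial : ℂ))) := by
    intro y hy
    have hyM : y ≤ M := by have := Finset.mem_range.1 hy; omega
    have hdesc : ((n+y).factorial : ℂ) = (y.factorial : ℂ) * ((n+y).descFactorial n : ℂ) := by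
      have h := Nat.factorial_mul_descFactorial (Nat.le_add_right n y)
      rw [Nat.add_sub_cancel_left] at h
      rw [← Nat.cast_mul, h]
    have hdesc0 : ((n+y).descFactorial n : ℂ) ≠ 0 := by
      simp only [ne_eq, Nat.cast_eq_zero, Nat.descFactorial_eq_zero_iff_lt]
      omega
    have hpdy : poch d y ≠ 0 := poch_ne_zero _ _ (fun k hk => hdj k (by omega))
    have hfy : ((y.factorial : ℕ) : ℂ) ≠ 0 := Nat.cast_ne_zero.2 y.factorial_ne_zero
    rw [fallFac_nat_add, poch_add a n y, poch_add (-(N:ℂ)) n y, poch_add (b+1) n y,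
      show -(N:ℂ) + (n:ℂ) = -(M:ℂ) by rw [hNM]; push_cast; ring, hdesc, ← hc, ← hd]
    field_simp
  rw [Finset.sum_congr rfl hterm, ← Finset.mul_sum]
  congr 1
  -- the inner sum via Chu-Vandermonde
  have hbma : b + 1 - a = d - c := by rw [hd, hc]; ring
  rw [hbma, eq_div_iff hdM, Finset.sum_mul, ← chu M c d]
  apply Finset.sum_congr rfl
  intro y hy
  have hyM : y ≤ M := by have := Finset.mem_range.1 hy; omega
  have hpdy : poch d y ≠ 0 := poch_ne_zero _ _ (fun k hk => hdj k (by omega))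
  have hfy : ((y.factorial : ℕ) : ℂ) ≠ 0 := Nat.cast_ne_zero.2 y.factorial_ne_zero
  have hsplitd : poch d M = poch d y * poch (d + y) (M - y) := by
    rw [← poch_add, Nat.add_sub_cancel' hyM]
  rw [poch_neg_nat M y hyM, hsplitd, Nat.descFactorial_eq_factorial_mul_choose]
  push_cast
  field_simp
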